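/- Every Noetherian ℤ-torsion (t−1)-invertible Λ-module is finite, i.e., it is a finite abelian group. -/

import Mathlib

set_option linter.unusedSectionVars false
set_option maxHeartbeats 800000


open Polynomial

/-- `Λ` is the ring `ℤ[t,t⁻¹]` of Laurent polynomials with integer coefficients. -/
abbrev Λ : Type := LaurentPolynomial ℤ

/-- `tL` is the element `t` of `Λ = ℤ[t,t⁻¹]`. -/
noncomputable def tL : Λ := LaurentPolynomial.T 1

namespace ZTAux

open LaurentPolynomial

noncomputable def eps : Λ →ₐ[ℤ] ℤ := AddMonoidAlgebra.lift ℤ ℤ ℤ 1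

lemma eps_single (n : ℤ) (c : ℤ) : eps (AddMonoidAlgebra.single n c) = c := by
  rw [eps, AddMonoidAlgebra.lift_single]; simp

lemma eps_T (n : ℤ) : eps (T n) = 1 := by
  have h : (T n : Λ) = AddMonoidAlgebra.single n 1 := rfl
  rw [h, eps_single]

lemma eps_sum_coeff (g : Λ) : eps g = ∑ i ∈ g.coeff.support, g.coeff i := by
  conv_lhs => rw [← AddMonoidAlgebra.sum_single g]
  rw [Finsupp.sum, map_sum]
  exact Finset.sum_congr rfl fun i _ => eps_single i (g.coeff i)

variable {M : Type} [AddCommGroup M] [Module Λ M]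

lemma single_smul (n : ℤ) (c : ℤ) (v : M) :
    (AddMonoidAlgebra.single n c : Λ) • v = c • ((T n : Λ) • v) := by
  have h1 : (AddMonoidAlgebra.single n c : Λ) = LaurentPolynomial.C c * T n :=
    single_eq_C_mul_T c n
  have h2 : (LaurentPolynomial.C c : Λ) = (c : Λ) := eq_intCast (LaurentPolynomial.C : ℤ →+* Λ) c
  rw [h1, mul_smul, h2, Int.cast_smul_eq_zsmul]

lemma T_smul_T (n m : ℤ) (v : M) : (T n : Λ) • ((T m : Λ) • v) = (T (n+m) : Λ) • v := by
  rw [← mul_smul, ← T_add]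

lemma kill {p : ℕ} (htor : ∀ v : M, p • v = 0) {c : ℤ} (hc : (p : ℤ) ∣ c) (v : M) :
    c • v = 0 := by
  obtain ⟨m, rfl⟩ := hc
  rw [mul_smul, natCast_zsmul, htor]

lemma exists_inv_mod (p : ℕ) (hp : p.Prime) {c : ℤ} (hc : ¬ (p : ℤ) ∣ c) :
    ∃ e : ℤ, (p : ℤ) ∣ 1 - e * c := by
  haveI : Fact p.Prime := ⟨hp⟩
  have h0 : (c : ZMod p) ≠ 0 := by
    rwa [Ne, ZMod.intCast_zmod_eq_zero_iff_dvd]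
  refine ⟨(((c : ZMod p))⁻¹).val, ?_⟩
  rw [← ZMod.intCast_zmod_eq_zero_iff_dvd]
  push_cast
  rw [ZMod.natCast_val, ZMod.cast_id, inv_mul_cancel₀ h0, sub_self]

lemma sigma_pow_smul (k : ℕ) (v : M) :
    (((tL - 1) • (LinearMap.id : M →ₗ[Λ] M)) ^ k) v = ((tL - 1) ^ k : Λ) • v := by
  induction k with
  | zero => simp
  | succ k ih =>
    rw [pow_succ', Module.End.mul_apply, ih, LinearMap.smul_apply, LinearMap.id_apply,
      ← mul_smul, ← pow_succ']

lemma exists_annihilator [IsNoetherian Λ M]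
    (hbij : Function.Bijective fun v : M => (tL - 1) • v) :
    ∃ f : Λ, (∀ v : M, f • v = 0) ∧ eps f = 1 := by
  set σ : M →ₗ[Λ] M := (tL - 1) • LinearMap.id with hσdef
  have hσb : Function.Bijective σ := by
    have h : ⇑σ = fun v : M => (tL - 1) • v := by
      funext v; simp [hσdef]
    rw [h]; exact hbij
  let e : M ≃ₗ[Λ] M := LinearEquiv.ofBijective σ hσb
  set u : M →ₗ[Λ] M := (e.symm : M →ₗ[Λ] M) with hudef
  have hσu : ∀ w : M, σ (u w) = w := fun w => e.apply_symm_apply w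
  obtain ⟨q, hqm, hq0⟩ := LinearMap.exists_monic_and_aeval_eq_zero Λ u
  set n := q.natDegree with hn
  refine ⟨∑ i ∈ Finset.range (n+1), q.coeff i * (tL - 1) ^ (n - i), ?_, ?_⟩
  · intro v
    have hiter : ∀ (i : ℕ) (w : M), (σ ^ i) ((u ^ i) w) = w := by
      intro i
      induction i with
      | zero => intro w; simp
      | succ i ih =>
        intro w
        rw [pow_succ, pow_succ', Module.End.mul_apply, Module.End.mul_apply, hσu, ih]
    have h1 : (aeval u q) v = 0 := by rw [hq0]; rfl
    rw [Polynomial.aeval_eq_sum_range] at h1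
    have h2 : ∑ i ∈ Finset.range (n+1), q.coeff i • ((u ^ i) v) = 0 := by
      simpa using h1
    have h3 : (σ ^ n) (∑ i ∈ Finset.range (n+1), q.coeff i • ((u ^ i) v)) = 0 := by
      rw [h2, map_zero]
    rw [map_sum] at h3
    have h4 : ∀ i ∈ Finset.range (n+1),
        (σ ^ n) (q.coeff i • ((u ^ i) v)) = (q.coeff i * (tL-1)^(n-i)) • v := by
      intro i hi
      rw [map_smul]
      have hni : n = (n - i) + i :=
        (Nat.sub_add_cancel (Nat.lt_succ_iff.mp (Finset.mem_range.mp hi))).symm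
      have h5 : (σ ^ n) ((u ^ i) v) = ((tL-1)^(n-i) : Λ) • v := by
        conv_lhs => rw [hni]
        rw [pow_add, Module.End.mul_apply, hiter, sigma_pow_smul]
      rw [h5, smul_smul]
    rw [Finset.sum_congr rfl h4] at h3
    rw [Finset.sum_smul]
    exact h3
  · rw [map_sum, Finset.sum_eq_single n]
    · rw [map_mul, Nat.sub_self, pow_zero, map_one, mul_one, hqm.coeff_natDegree, map_one]
    · intro i hi hne
      rw [map_mul, map_pow, map_sub, map_one, tL, eps_T, sub_self, zero_pow, mul_zero]
      have : i < n + 1 := Finset.mem_range.mp hi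
      omega
    · intro hn'; exact absurd (Finset.self_mem_range_succ n) hn'

lemma finite_of_prime (p : ℕ) (hp : p.Prime) (M : Type) [AddCommGroup M] [Module Λ M]
    [IsNoetherian Λ M]
    (hbij : Function.Bijective fun v : M => (tL - 1) • v)
    (htor : ∀ v : M, p • v = 0) : Finite M := by
  classical
  obtain ⟨f, hfv, hef⟩ := exists_annihilator hbij
  obtain ⟨s, hs⟩ := IsNoetherian.noetherian (⊤ : Submodule Λ M)
  set cset : Finset ℤ := f.coeff.support.filter (fun i => ¬ (p:ℤ) ∣ f.coeff i) with hcset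
  have hcne : cset.Nonempty := by
    by_contra h
    rw [Finset.not_nonempty_iff_eq_empty] at h
    have hdvd : (p:ℤ) ∣ eps f := by
      rw [eps_sum_coeff]
      refine Finset.dvd_sum fun i hi => ?_
      by_contra hdi
      have hmem : i ∈ cset := Finset.mem_filter.mpr ⟨hi, hdi⟩
      simp [h] at hmem
    rw [hef] at hdvd
    have h1 := Int.le_of_dvd one_pos hdvd
    have h2 := hp.two_le
    omega
  set r := cset.min' hcne with hr
  set d := cset.max' hcne with hd
  have hdc : d ∈ cset := Finset.max'_mem _ _
  have hrc : r ∈ cset := Finset.min'_mem _ _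
  have hrd : r ≤ d := Finset.min'_le _ _ hdc
  have hdnd : ¬ (p:ℤ) ∣ f.coeff d := (Finset.mem_filter.mp hdc).2
  have hrnd : ¬ (p:ℤ) ∣ f.coeff r := (Finset.mem_filter.mp hrc).2
  obtain ⟨ed, hed⟩ := exists_inv_mod p hp hdnd
  obtain ⟨er, her⟩ := exists_inv_mod p hp hrnd
  have hkey : ∀ (m : ℤ) (v : M), ∑ i ∈ cset, (f.coeff i) • ((T (i + m) : Λ) • v) = 0 := by
    intro m v
    have h0 : ((T m : Λ) * f) • v = 0 := by rw [mul_smul, hfv, smul_zero]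
    have hexp : ((T m : Λ) * f) • v = ∑ i ∈ f.coeff.support, (f.coeff i) • ((T (i+m) : Λ) • v) := by
      conv_lhs => rw [← AddMonoidAlgebra.sum_single f]
      rw [Finsupp.sum, Finset.mul_sum, Finset.sum_smul]
      refine Finset.sum_congr rfl fun i hi => ?_
      have e1 : (AddMonoidAlgebra.single i (f.coeff i) : Λ) = LaurentPolynomial.C (f.coeff i) * T i :=
        single_eq_C_mul_T _ _
      have e2 : (AddMonoidAlgebra.single (i+m) (f.coeff i) : Λ)
          = LaurentPolynomial.C (f.coeff i) * T (i+m) := single_eq_C_mul_T _ _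
      have h1 : (T m : Λ) * AddMonoidAlgebra.single i (f.coeff i)
          = AddMonoidAlgebra.single (i+m) (f.coeff i) := by
        rw [e1, e2, T_add]; ring
      rw [h1, single_smul]
    have hsplit : ∑ i ∈ cset, (f.coeff i) • ((T (i+m) : Λ) • v)
        = ∑ i ∈ f.coeff.support, (f.coeff i) • ((T (i+m) : Λ) • v) :=
      Finset.sum_filter_of_ne fun i hi hne hdvd => hne (kill htor hdvd _)
    rw [hsplit, ← hexp, h0]
  set gset : Finset M := (Finset.Icc r d ×ˢ s).image (fun x => (T x.1 : Λ) • x.2) with hgset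
  set S : Submodule ℤ M := Submodule.span ℤ (gset : Set M) with hS
  have hgen : ∀ i, i ∈ Finset.Icc r d → ∀ w ∈ s, (T i : Λ) • w ∈ S := by
    intro i hi w hw
    exact Submodule.subset_span
      (Finset.mem_coe.mpr (Finset.mem_image.mpr ⟨(i, w), Finset.mem_product.mpr ⟨hi, hw⟩, rfl⟩))
  have hred : ∀ (j : ℤ), j ∈ cset → ∀ (ej : ℤ), (p:ℤ) ∣ 1 - ej * f.coeff j → ∀ (m : ℤ) (v : M),
      (T (j + m) : Λ) • v = ∑ i ∈ cset.erase j, (-(ej * f.coeff i)) • ((T (i + m) : Λ) • v) := by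
    intro j hj ej hej m v
    have h0 := hkey m v
    rw [← Finset.add_sum_erase _ _ hj] at h0
    have h1 : (T (j+m) : Λ) • v
        = (1 - ej * f.coeff j) • ((T (j+m):Λ) • v) + ej • (f.coeff j • ((T (j+m):Λ) • v)) := by
      rw [smul_smul, ← add_smul]
      norm_num
    rw [h1, kill htor hej, zero_add]
    have h2 : f.coeff j • ((T (j+m):Λ) • v) = -∑ i ∈ cset.erase j, (f.coeff i) • ((T (i+m):Λ) • v) :=
      eq_neg_of_add_eq_zero_left h0
    rw [h2, smul_neg, Finset.smul_sum, ← Finset.sum_neg_distrib]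
    refine Finset.sum_congr rfl fun i hi => ?_
    rw [smul_smul, ← neg_smul]
  have htop : ∀ w ∈ s, (T (d + 1) : Λ) • w ∈ S := by
    intro w hw
    rw [hred d hdc ed hed 1 w]
    refine Submodule.sum_mem S fun i hi => ?_
    refine S.smul_mem _ (hgen (i+1) ?_ w hw)
    obtain ⟨h3, h4⟩ := Finset.mem_erase.mp hi
    have h5 : r ≤ i := Finset.min'_le _ _ h4
    have h6 : i ≤ d := Finset.le_max' _ _ h4
    rw [Finset.mem_Icc]
    omega
  have hbot : ∀ w ∈ s, (T (r - 1) : Λ) • w ∈ S := by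
    intro w hw
    rw [show r - 1 = r + (-1) by ring, hred r hrc er her (-1) w]
    refine Submodule.sum_mem S fun i hi => ?_
    refine S.smul_mem _ (hgen (i + (-1)) ?_ w hw)
    obtain ⟨h3, h4⟩ := Finset.mem_erase.mp hi
    have h5 : r ≤ i := Finset.min'_le _ _ h4
    have h6 : i ≤ d := Finset.le_max' _ _ h4
    rw [Finset.mem_Icc]
    omega
  have hcl1 : ∀ x ∈ S, (T 1 : Λ) • x ∈ S := by
    intro x hx
    induction hx using Submodule.span_induction with
    | mem y hy =>
      obtain ⟨⟨i, w⟩, hiw, rfl⟩ := Finset.mem_image.mp (Finset.mem_coe.mp hy)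
      obtain ⟨hi, hw⟩ := Finset.mem_product.mp hiw
      rw [T_smul_T]
      rw [Finset.mem_Icc] at hi
      by_cases hid : i = d
      · subst hid
        rw [add_comm]
        exact htop w hw
      · exact hgen (1+i) (Finset.mem_Icc.mpr ⟨by omega, by omega⟩) w hw
    | zero => rw [smul_zero]; exact S.zero_mem
    | add x y hx hy ihx ihy => rw [smul_add]; exact S.add_mem ihx ihy
    | smul c x hx ihx => rw [smul_comm]; exact S.smul_mem c ihx
  have hclm : ∀ x ∈ S, (T (-1) : Λ) • x ∈ S := by
    intro x hx
    induction hx using Submodule.span_induction with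
    | mem y hy =>
      obtain ⟨⟨i, w⟩, hiw, rfl⟩ := Finset.mem_image.mp (Finset.mem_coe.mp hy)
      obtain ⟨hi, hw⟩ := Finset.mem_product.mp hiw
      rw [T_smul_T]
      rw [Finset.mem_Icc] at hi
      by_cases hid : i = r
      · subst hid
        rw [show (-1) + r = r - 1 by ring]
        exact hbot w hw
      · exact hgen (-1+i) (Finset.mem_Icc.mpr ⟨by omega, by omega⟩) w hw
    | zero => rw [smul_zero]; exact S.zero_mem
    | add x y hx hy ihx ihy => rw [smul_add]; exact S.add_mem ihx ihy
    | smul c x hx ihx => rw [smul_comm]; exact S.smul_mem c ihx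
  have hTn : ∀ (m : ℤ) (x : M), x ∈ S → (T m : Λ) • x ∈ S := by
    intro m
    induction m using Int.induction_on with
    | zero => intro x hx; rw [T_zero, one_smul]; exact hx
    | succ k ih =>
      intro x hx
      have h1 : (T ((k:ℤ)+1) : Λ) • x = (T 1 : Λ) • ((T k : Λ) • x) := by
        rw [T_smul_T, add_comm]
      rw [h1]
      exact hcl1 _ (ih x hx)
    | pred k ih =>
      intro x hx
      have h1 : (T (-(k:ℤ)-1) : Λ) • x = (T (-1) : Λ) • ((T (-k) : Λ) • x) := by
        rw [T_smul_T, show (-1 + -(k:ℤ)) = -(k:ℤ)-1 by ring]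
      rw [h1]
      exact hclm _ (ih x hx)
  have hΛ : ∀ (c : Λ) (x : M), x ∈ S → c • x ∈ S := by
    intro c x hx
    have hc : c • x = ∑ i ∈ c.coeff.support, (c.coeff i) • ((T i : Λ) • x) := by
      conv_lhs => rw [← AddMonoidAlgebra.sum_single c]
      rw [Finsupp.sum, Finset.sum_smul]
      exact Finset.sum_congr rfl fun i _ => single_smul i (c.coeff i) x
    rw [hc]
    exact Submodule.sum_mem S fun i _ => S.smul_mem _ (hTn i x hx)
  have hST : ∀ v : M, v ∈ S := by
    intro v
    have hv : v ∈ Submodule.span Λ (↑s : Set M) := by rw [hs]; trivial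
    induction hv using Submodule.span_induction with
    | mem w hw =>
      have h1 : (T r : Λ) • w ∈ S := hgen r (Finset.mem_Icc.mpr ⟨le_refl r, hrd⟩) w hw
      have h2 := hTn (-r) _ h1
      rw [T_smul_T, neg_add_cancel, T_zero, one_smul] at h2
      exact h2
    | zero => exact S.zero_mem
    | add x y hx hy ihx ihy => exact S.add_mem ihx ihy
    | smul c x hx ihx => exact hΛ c x ihx
  haveI hfin : Module.Finite ℤ M := by
    refine ⟨⟨gset, ?_⟩⟩
    rw [eq_top_iff]
    exact fun v _ => hST v
  have htorsion : Module.IsTorsion ℤ M := by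
    intro v
    refine ⟨⟨(p:ℤ), mem_nonZeroDivisors_of_ne_zero (by exact_mod_cast hp.ne_zero)⟩, ?_⟩
    show ((p:ℤ)) • v = 0
    rw [natCast_zsmul, htor]
  exact Module.finite_of_fg_torsion M htorsion

lemma finite_of_torsion (N : ℕ) : 0 < N → ∀ (M : Type) [AddCommGroup M] [Module Λ M]
    [IsNoetherian Λ M],
    Function.Bijective (fun v : M => (tL - 1) • v) → (∀ v : M, N • v = 0) → Finite M := by
  induction N using Nat.strong_induction_on with
  | _ N ih =>
    intro hN M _ _ _ hbij htor
    by_cases hN1 : N = 1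
    · subst hN1
      have hz : ∀ v : M, v = 0 := fun v => by simpa using htor v
      haveI : Subsingleton M := ⟨fun a b => by rw [hz a, hz b]⟩
      infer_instance
    · set p := N.minFac with hpdef
      have hp : p.Prime := Nat.minFac_prime hN1
      have hpd : p ∣ N := N.minFac_dvd
      set φ : M →ₗ[Λ] M := (p : ℕ) • LinearMap.id with hφ
      have hφa : ∀ v : M, φ v = p • v := fun v => rfl
      set Mp : Submodule Λ M := LinearMap.range φ with hMp
      have hmem : ∀ v : M, p • v ∈ Mp := fun v => ⟨v, rfl⟩
      -- the quotient
      have hsurjQ : Function.Surjective (fun x : M ⧸ Mp => (tL - 1) • x) := by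
        intro x
        obtain ⟨v, rfl⟩ := Submodule.Quotient.mk_surjective Mp x
        obtain ⟨w, hw⟩ := hbij.2 v
        refine ⟨Submodule.Quotient.mk w, ?_⟩
        show (tL - 1) • (Submodule.Quotient.mk w : M ⧸ Mp) = Submodule.Quotient.mk v
        rw [← Submodule.Quotient.mk_smul]
        exact congrArg _ hw
      have hinjQ : Function.Injective (fun x : M ⧸ Mp => (tL - 1) • x) := by
        have hker : ∀ x : M ⧸ Mp, (tL - 1) • x = 0 → x = 0 := by
          intro x hx
          obtain ⟨v, rfl⟩ := Submodule.Quotient.mk_surjective Mp x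
          have hx' : (Submodule.Quotient.mk ((tL - 1) • v) : M ⧸ Mp) = 0 := by
            rw [Submodule.Quotient.mk_smul]; exact hx
          rw [Submodule.Quotient.mk_eq_zero] at hx'
          obtain ⟨w, hw⟩ := hx'
          obtain ⟨w', hw'⟩ := hbij.2 w
          rw [Submodule.Quotient.mk_eq_zero]
          refine ⟨w', ?_⟩
          apply hbij.1
          show (tL - 1) • (φ w') = (tL - 1) • v
          rw [hφa, smul_comm]
          have hww : (tL - 1) • w' = w := hw'
          rw [hww]
          rw [hφa] at hw
          exact hw
        intro x y hxy
        have h1 : (tL - 1) • (x - y) = 0 := by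
          rw [smul_sub]
          rw [sub_eq_zero]
          exact hxy
        exact sub_eq_zero.mp (hker _ h1)
      have htorQ : ∀ x : M ⧸ Mp, p • x = 0 := by
        intro x
        obtain ⟨v, rfl⟩ := Submodule.Quotient.mk_surjective Mp x
        have h1 : (p • (Submodule.Quotient.mk v : M ⧸ Mp)) = Submodule.Quotient.mk (p • v) := by
          rw [← Submodule.mkQ_apply, ← map_nsmul, Submodule.mkQ_apply]
        rw [h1, Submodule.Quotient.mk_eq_zero]
        exact hmem v
      have hfinQ : Finite (M ⧸ Mp) := finite_of_prime p hp (M ⧸ Mp) ⟨hinjQ, hsurjQ⟩ htorQ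
      -- the submodule
      have hbijMp : Function.Bijective (fun w : Mp => (tL - 1) • w) := by
        constructor
        · intro a b hab
          apply Subtype.ext
          apply hbij.1
          have h1 := congrArg Subtype.val hab
          simpa using h1
        · rintro ⟨-, w, rfl⟩
          obtain ⟨w', hw'⟩ := hbij.2 w
          refine ⟨⟨φ w', ⟨w', rfl⟩⟩, ?_⟩
          apply Subtype.ext
          show (tL - 1) • (φ w') = φ w
          rw [hφa, hφa, smul_comm]
          have hww : (tL - 1) • w' = w := hw'
          rw [hww]
      have htorMp : ∀ w : Mp, (N / p) • w = 0 := by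
        rintro ⟨-, w, rfl⟩
        apply Subtype.ext
        show (N / p) • (φ w) = (0 : M)
        rw [hφa, ← mul_smul, Nat.div_mul_cancel hpd]
        exact htor w
      have hfinMp : Finite Mp :=
        ih (N / p) (Nat.div_lt_self (by omega) hp.one_lt)
          (Nat.div_pos (Nat.minFac_le (by omega)) hp.pos) Mp hbijMp htorMp
      -- combine
      have hcomb : Function.Surjective
          (fun x : (M ⧸ Mp) × Mp => Quotient.out x.1 + x.2.val) := by
        intro v
        have hout : (Submodule.Quotient.mk (Quotient.out (Submodule.Quotient.mk v : M ⧸ Mp))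
            : M ⧸ Mp) = Submodule.Quotient.mk v := Quotient.out_eq _
        refine ⟨(Submodule.Quotient.mk v,
          ⟨v - Quotient.out (Submodule.Quotient.mk v : M ⧸ Mp), ?_⟩), ?_⟩
        · exact (Submodule.Quotient.eq Mp).mp hout.symm
        · show Quotient.out (Submodule.Quotient.mk v : M ⧸ Mp)
            + (v - Quotient.out (Submodule.Quotient.mk v : M ⧸ Mp)) = v
          abel
      exact Finite.of_surjective _ hcomb

end ZTAux

/-- A Noetherian ℤ-torsion (t−1)-invertible Λ-module is a finite abelian group. -/
theorem zTorsion_invertible_finite (M : Type) [AddCommGroup M] [Module Λ M]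
    [IsNoetherian Λ M]
    (hM : Function.Bijective (fun v : M => (tL - 1) • v))
    (htor : ∀ v : M, ∃ n : ℕ, 0 < n ∧ n • v = 0) :
    Finite M := by
  obtain ⟨s, hs⟩ := IsNoetherian.noetherian (⊤ : Submodule Λ M)
  choose nf hnf0 hnf using htor
  set N : ℕ := ∏ w ∈ s, nf w with hN
  have hN0 : 0 < N := Finset.prod_pos fun w _ => hnf0 w
  have hNtor : ∀ v : M, N • v = 0 := by
    intro v
    have hv : v ∈ Submodule.span Λ (↑s : Set M) := by rw [hs]; trivial
    induction hv using Submodule.span_induction with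
    | mem w hw =>
      obtain ⟨k, hk⟩ := Finset.dvd_prod_of_mem nf hw
      rw [hN, hk, mul_comm (nf w) k, mul_smul, hnf w, smul_zero]
    | zero => rw [smul_zero]
    | add x y hx hy ihx ihy => rw [smul_add, ihx, ihy, add_zero]
    | smul c x hx ihx => rw [smul_comm, ihx, smul_zero]
  exact ZTAux.finite_of_torsion N hN0 M hM hNtor
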